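/- Vector-valued version of the nonvanishing lemma: let X be a real normed space, let (x_n)_{n≥1} be a sequence in X such that η = Σ_{n≥1} r_n x_n converges almost surely and η is not almost surely zero. Then ℙ(η = 0) ≤ 1 − 2 e^{−2+γ}, where γ is Euler's constant. -/

import Mathlib

open MeasureTheory ProbabilityTheory ENNReal

/-- A Rademacher sequence: independent random variables taking the values `1` and `-1`,
each with probability `1/2`. -/
def IsRademacherSeq {Ω : Type*} [MeasurableSpace Ω] (P : Measure Ω) (r : ℕ → Ω → ℝ) : Prop :=
  (∀ n, Measurable (r n)) ∧
  iIndepFun r P ∧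
  (∀ n, P {ω | r n ω = 1} = 1/2 ∧ P {ω | r n ω = -1} = 1/2)

section Aux

open Filter Topology


private lemma tendsto_shift_aux {X : Type*} [NormedAddCommGroup X]
    {u v : ℕ → X} {a : X} (h : ∀ᶠ N in atTop, u N = a + v N) :
    Tendsto u atTop (𝓝 0) ↔ Tendsto v atTop (𝓝 (-a)) := by
  constructor
  · intro hu
    have h2 := hu.sub_const a
    rw [zero_sub] at h2
    exact h2.congr' (h.mono fun N hN => by rw [hN]; abel)
  · intro hv
    have h2 := hv.const_add a
    rw [add_neg_cancel] at h2
    exact h2.congr' (h.mono fun N hN => hN.symm)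

private lemma Bmeas_aux {Ω : Type*} (r : ℕ → Ω → ℝ)
    {X : Type*} [NormedAddCommGroup X] [NormedSpace ℝ X]
    (x : ℕ → X) (n : ℕ) (c : X) :
    MeasurableSet[⨆ k ∈ ({n}ᶜ : Set ℕ), MeasurableSpace.comap (r k) Real.measurableSpace]
      {ω | Tendsto (fun N => ∑ k ∈ (Finset.range N).erase n, r k ω • x k) atTop (𝓝 c)} := by
  letI m' : MeasurableSpace Ω :=
    ⨆ k ∈ ({n}ᶜ : Set ℕ), MeasurableSpace.comap (r k) Real.measurableSpace
  show MeasurableSet[m'] _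
  have hrw : {ω : Ω | Tendsto (fun N => ∑ k ∈ (Finset.range N).erase n, r k ω • x k)
      atTop (𝓝 c)} =
      {ω | Tendsto (fun N => ‖(∑ k ∈ (Finset.range N).erase n, r k ω • x k) - c‖)
        atTop (𝓝 0)} := by
    ext ω
    exact tendsto_iff_norm_sub_tendsto_zero
  rw [hrw]
  have hfm : ∀ N : ℕ, Measurable[m']
      (fun ω => ‖(∑ k ∈ (Finset.range N).erase n, r k ω • x k) - c‖) := by
    intro N
    have hproj : Measurable[m'] (fun ω k => if k = n then (0:ℝ) else r k ω) := by
      rw [measurable_pi_iff]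
      intro k
      by_cases hk : k = n
      · simp only [hk, if_pos rfl]; exact measurable_const
      · simp only [if_neg hk]
        exact (measurable_iff_comap_le).mpr
          (le_biSup (fun k => MeasurableSpace.comap (r k) Real.measurableSpace)
            (by simp [hk] : k ∈ ({n}ᶜ : Set ℕ)))
    have hF : Continuous (fun v : ℕ → ℝ =>
        ‖(∑ k ∈ (Finset.range N).erase n, v k • x k) - c‖) := by
      apply Continuous.norm
      apply Continuous.sub _ continuous_const
      exact continuous_finset_sum _ fun k _ => (continuous_apply k).smul continuous_const
    have heq : (fun ω => ‖(∑ k ∈ (Finset.range N).erase n, r k ω • x k) - c‖) =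
        (fun v : ℕ → ℝ => ‖(∑ k ∈ (Finset.range N).erase n, v k • x k) - c‖) ∘
        (fun ω k => if k = n then (0:ℝ) else r k ω) := by
      funext ω
      simp only [Function.comp_apply]
      congr 2
      apply Finset.sum_congr rfl
      intro k hk
      rw [if_neg (Finset.ne_of_mem_erase hk)]
    rw [heq]
    exact hF.measurable.comp hproj
  exact measurableSet_tendsto (𝓝 (0:ℝ)) hfm

theorem rademacher_half
    {Ω : Type*} [mΩ : MeasurableSpace Ω] (P : Measure Ω) [IsProbabilityMeasure P]
    (r : ℕ → Ω → ℝ)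
    (hmeas : ∀ n, Measurable (r n))
    (hindep : iIndepFun r P)
    (hval : ∀ n, P {ω | r n ω = 1} = 1/2 ∧ P {ω | r n ω = -1} = 1/2)
    {X : Type*} [NormedAddCommGroup X] [NormedSpace ℝ X]
    (x : ℕ → X) (η : Ω → X)
    (hη : ∀ᵐ ω ∂P, HasSum (fun n => r n ω • x n) (η ω))
    (hne : ¬ (η =ᵐ[P] (fun _ => (0:X)))) :
    P {ω | η ω = 0} ≤ 1/2 := by
  obtain ⟨n, hxn⟩ : ∃ n, x n ≠ 0 := by
    by_contra hall
    push_neg at hall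
    apply hne
    filter_upwards [hη] with ω hω
    have h0 : HasSum (fun k => r k ω • x k) 0 := by
      have : (fun k => r k ω • x k) = fun _ => (0:X) := funext fun k => by
        rw [hall k, smul_zero]
      rw [this]; exact hasSum_zero
    exact hω.unique h0
  set S : ℕ → Ω → X := fun N ω => ∑ k ∈ Finset.range N, r k ω • x k with hS
  set h : ℕ → Ω → X := fun N ω => ∑ k ∈ (Finset.range N).erase n, r k ω • x k with hh
  set T : Set Ω := {ω | Tendsto (fun N => S N ω) atTop (𝓝 0)} with hT
  set B : X → Set Ω := fun c => {ω | Tendsto (fun N => h N ω) atTop (𝓝 c)} with hB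
  set A₁ : Set Ω := {ω | r n ω = 1} with hA₁
  set A₂ : Set Ω := {ω | r n ω = -1} with hA₂
  have hm'le : (⨆ k ∈ ({n}ᶜ : Set ℕ), MeasurableSpace.comap (r k) Real.measurableSpace) ≤ mΩ :=
    iSup₂_le fun k _ => measurable_iff_comap_le.mp (hmeas k)
  have hBmeas : ∀ c : X,
      MeasurableSet[⨆ k ∈ ({n}ᶜ : Set ℕ),
        MeasurableSpace.comap (r k) Real.measurableSpace] (B c) :=
    fun c => Bmeas_aux r x n c
  have hBamb : ∀ c : X, MeasurableSet (B c) := fun c => hm'le _ (hBmeas c)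
  -- independence
  have hI : Indep (MeasurableSpace.comap (r n) Real.measurableSpace)
      (⨆ k ∈ ({n}ᶜ : Set ℕ), MeasurableSpace.comap (r k) Real.measurableSpace) P := by
    have h1 : iIndep (fun k => MeasurableSpace.comap (r k) Real.measurableSpace) P := hindep
    have h2 := indep_biSup_compl (fun k => measurable_iff_comap_le.mp (hmeas k)) h1 {n}
    simpa [iSup_singleton] using h2
  have hIiff := (Indep_iff _ _ P).mp hI
  have hA₁c : MeasurableSet[MeasurableSpace.comap (r n) Real.measurableSpace] A₁ :=
    ⟨{1}, measurableSet_singleton 1, by ext ω; simp [hA₁]⟩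
  have hA₂c : MeasurableSet[MeasurableSpace.comap (r n) Real.measurableSpace] A₂ :=
    ⟨{-1}, measurableSet_singleton (-1), by ext ω; simp [hA₂]⟩
  have hA₁m : MeasurableSet A₁ := measurable_iff_comap_le.mp (hmeas n) _ hA₁c
  have hA₂m : MeasurableSet A₂ := measurable_iff_comap_le.mp (hmeas n) _ hA₂c
  have hev : ∀ ω, ∀ᶠ N in atTop, S N ω = (r n ω • x n) + h N ω := by
    intro ω
    filter_upwards [eventually_gt_atTop n] with N hN
    exact (Finset.add_sum_erase _ _ (Finset.mem_range.2 hN)).symm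
  have E1 : T ∩ A₁ = B (-(x n)) ∩ A₁ := by
    ext ω
    simp only [Set.mem_inter_iff, hT, hB, hA₁, Set.mem_setOf_eq]
    constructor
    · rintro ⟨hto, h1⟩
      exact ⟨(tendsto_shift_aux (a := x n) (v := fun N => h N ω)
        ((hev ω).mono fun N hN => by rw [hN, h1, one_smul])).mp hto, h1⟩
    · rintro ⟨hto, h1⟩
      exact ⟨(tendsto_shift_aux (a := x n) (v := fun N => h N ω)
        ((hev ω).mono fun N hN => by rw [hN, h1, one_smul])).mpr hto, h1⟩
  have E2 : T ∩ A₂ = B (x n) ∩ A₂ := by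
    ext ω
    simp only [Set.mem_inter_iff, hT, hB, hA₂, Set.mem_setOf_eq]
    constructor
    · rintro ⟨hto, h1⟩
      refine ⟨?_, h1⟩
      have := (tendsto_shift_aux (a := -(x n)) (v := fun N => h N ω)
        ((hev ω).mono fun N hN => by rw [hN, h1, neg_one_smul])).mp hto
      simpa using this
    · rintro ⟨hto, h1⟩
      exact ⟨(tendsto_shift_aux (a := -(x n)) (v := fun N => h N ω)
        ((hev ω).mono fun N hN => by rw [hN, h1, neg_one_smul])).mpr (by simpa using hto), h1⟩
  have hA₁val : P A₁ = 1/2 := (hval n).1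
  have hA₂val : P A₂ = 1/2 := (hval n).2
  have hdisjA : Disjoint A₁ A₂ := by
    rw [Set.disjoint_left]
    intro ω h1 h2
    simp only [hA₁, hA₂, Set.mem_setOf_eq] at h1 h2
    rw [h1] at h2; norm_num at h2
  have hcompl : P ((A₁ ∪ A₂)ᶜ) = 0 := by
    have hu : P (A₁ ∪ A₂) = 1 := by
      rw [measure_union hdisjA hA₂m, hA₁val, hA₂val, one_div, ENNReal.inv_two_add_inv_two]
    rw [prob_compl_eq_zero_iff (hA₁m.union hA₂m)]
    exact hu
  have hsub : T ⊆ (T ∩ A₁) ∪ (T ∩ A₂) ∪ (A₁ ∪ A₂)ᶜ := by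
    intro ω hω
    by_cases h1 : ω ∈ A₁
    · exact Or.inl (Or.inl ⟨hω, h1⟩)
    by_cases h2 : ω ∈ A₂
    · exact Or.inl (Or.inr ⟨hω, h2⟩)
    · exact Or.inr (fun hc => hc.elim h1 h2)
  have hprod : ∀ (c : X) (A : Set Ω),
      MeasurableSet[MeasurableSpace.comap (r n) Real.measurableSpace] A →
      P (B c ∩ A) = P A * P (B c) := by
    intro c A hA
    rw [Set.inter_comm]
    exact hIiff A (B c) hA (hBmeas c)
  have hdisjB : Disjoint (B (-(x n))) (B (x n)) := by
    rw [Set.disjoint_left]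
    intro ω h1 h2
    simp only [hB, Set.mem_setOf_eq] at h1 h2
    have hne2 := tendsto_nhds_unique h1 h2
    apply hxn
    have h20 : (2:ℝ) • x n = 0 := by
      rw [two_smul]
      nth_rewrite 1 [← neg_neg (x n)]
      rw [hne2]; abel
    have h3 := congrArg (fun y => (2:ℝ)⁻¹ • y) h20
    simpa [smul_smul] using h3
  have hBsum : P (B (-(x n))) + P (B (x n)) ≤ 1 := by
    rw [← measure_union hdisjB (hBamb _)]
    exact prob_le_one
  have hT12 : P T ≤ 1/2 := by
    calc P T ≤ P ((T ∩ A₁) ∪ (T ∩ A₂) ∪ (A₁ ∪ A₂)ᶜ) := measure_mono hsub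
    _ ≤ P ((T ∩ A₁) ∪ (T ∩ A₂)) + P ((A₁ ∪ A₂)ᶜ) := measure_union_le _ _
    _ = P ((T ∩ A₁) ∪ (T ∩ A₂)) := by rw [hcompl, add_zero]
    _ ≤ P (T ∩ A₁) + P (T ∩ A₂) := measure_union_le _ _
    _ = P A₁ * P (B (-(x n))) + P A₂ * P (B (x n)) := by
        rw [E1, E2, hprod _ _ hA₁c, hprod _ _ hA₂c]
    _ = 1/2 * (P (B (-(x n))) + P (B (x n))) := by
        rw [hA₁val, hA₂val, mul_add]
    _ ≤ 1/2 * 1 := mul_le_mul_right hBsum _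
    _ = 1/2 := mul_one _
  have hae : {ω | η ω = 0} =ᵐ[P] T := by
    rw [Filter.eventuallyEq_set]
    filter_upwards [hη] with ω hω
    simp only [Set.mem_setOf_eq, hT]
    constructor
    · intro h0
      rw [h0] at hω
      exact hω.tendsto_sum_nat
    · intro hto
      exact tendsto_nhds_unique hω.tendsto_sum_nat hto
  rw [measure_congr hae]
  exact hT12


private lemma exp_numeric_aux : Real.exp (-2 + Real.eulerMascheroniConstant) < 1/4 := by
  have hγ : Real.eulerMascheroniConstant < 2 - 2 * Real.log 2 := by
    have h1 := Real.eulerMascheroniConstant_lt_eulerMascheroniSeq' 16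
    have h2 : Real.eulerMascheroniSeq' 16 = (harmonic 16 : ℝ) - Real.log 16 := by
      simp [Real.eulerMascheroniSeq']
    have h3 : Real.log 16 = 4 * Real.log 2 := by
      rw [show (16:ℝ) = 2^(4:ℕ) by norm_num, Real.log_pow]; norm_num
    have h4 : (harmonic 16 : ℝ) < 2 + 2 * Real.log 2 := by
      have := Real.log_two_gt_d9
      norm_num [harmonic, Finset.sum_range_succ] at *
      linarith
    rw [h2, h3] at h1
    linarith
  have h : Real.exp (-2 + Real.eulerMascheroniConstant) < Real.exp (-(2*Real.log 2)) :=
    Real.exp_lt_exp.2 (by linarith)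
  have h4 : Real.exp (-(2*Real.log 2)) = 1/4 := by
    rw [Real.exp_neg, show (2:ℝ)*Real.log 2 = Real.log 4 by
      rw [show (4:ℝ) = 2^(2:ℕ) by norm_num, Real.log_pow]; norm_num,
      Real.exp_log (by norm_num)]
    norm_num
  linarith

end Aux

/-- Vector-valued nonvanishing lemma: if `η = ∑ r_n x_n` converges almost surely in a
real normed space `X` and `η` is not almost surely zero, then
`ℙ(η = 0) ≤ 1 - 2 e^{-2+γ}`. -/
theorem rademacher_sum_zero_prob_le_vector
    {Ω : Type*} [MeasurableSpace Ω] (P : Measure Ω) [IsProbabilityMeasure P]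
    (r : ℕ → Ω → ℝ) (hr : IsRademacherSeq P r)
    {X : Type*} [NormedAddCommGroup X] [NormedSpace ℝ X]
    (x : ℕ → X) (η : Ω → X)
    (hη : ∀ᵐ ω ∂P, HasSum (fun n => r n ω • x n) (η ω))
    (hne : ¬ (η =ᵐ[P] (fun _ => (0:X)))) :
    P {ω | η ω = 0} ≤
      ENNReal.ofReal (1 - 2 * Real.exp (-2 + Real.eulerMascheroniConstant)) := by
  obtain ⟨hmeas, hindep, hval⟩ := hr
  have h12 := rademacher_half P r hmeas hindep hval x η hη hne
  refine h12.trans ?_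
  have hhalf : (1/2 : ℝ≥0∞) = ENNReal.ofReal (1/2) := by
    rw [ENNReal.ofReal_div_of_pos (by norm_num), ENNReal.ofReal_one]
    norm_num
  rw [hhalf]
  apply ENNReal.ofReal_le_ofReal
  have := exp_numeric_aux
  linarith
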